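/- If 𝐱* = 1_n ⊗ x* is a solution of the constrained problem (i.e., x* minimizes f = Σ_i f^i), then there exists 𝐳* ∈ ℝ^{nd} with 𝐋𝐳* ∈ −∂f̃(𝐱*) such that (𝐱*, 𝐳*) is a saddle point of F(𝐱, 𝐳) = f̃(𝐱) + 𝐱ᵀ𝐋𝐳 + ½ 𝐱ᵀ𝐋𝐱. -/

import Mathlib

open Matrix BigOperators

/-- The subdifferential of `g : (ι → ℝ) → ℝ` at `x`, with respect to the dot product. -/
def subdiff {ι : Type*} [Fintype ι] (g : (ι → ℝ) → ℝ) (x : ι → ℝ) : Set (ι → ℝ) :=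
  {v | ∀ y, g x + v ⬝ᵥ (y - x) ≤ g y}

lemma subgrad_exists {n d : ℕ}
    (f : Fin n → (Fin d → ℝ) → ℝ)
    (hconv : ∀ i, ConvexOn ℝ Set.univ (f i))
    (hlip : ∀ i, LocallyLipschitz (f i))
    (xs : Fin d → ℝ) (hmin : ∀ y, ∑ i, f i xs ≤ ∑ i, f i y) :
    ∃ G : Fin n × Fin d → ℝ,
      (∀ Y : Fin n × Fin d → ℝ,
        (∑ i, f i (fun j => xs j)) + G ⬝ᵥ (Y - fun p => xs p.2)
          ≤ ∑ i, f i (fun j => Y (i,j))) ∧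
      (∀ v : Fin d → ℝ, G ⬝ᵥ (fun p => v p.2) = 0) := by
  classical
  set E := (Fin n × Fin d → ℝ)
  set F0 : E → ℝ := fun Y => ∑ i, f i (fun j => Y (i,j)) with hF0
  have hF0cont : Continuous F0 :=
    continuous_finset_sum _ fun i _ =>
      (hlip i).continuous.comp (continuous_pi fun j => continuous_apply (i, j))
  have hF0conv : ∀ (Y Z : E) (a b : ℝ), 0 ≤ a → 0 ≤ b → a + b = 1 →
      F0 (a • Y + b • Z) ≤ a * F0 Y + b * F0 Z := by
    intro Y Z a b ha hb hab
    have h : ∀ i : Fin n, f i (fun j => (a • Y + b • Z) (i, j))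
        ≤ a * f i (fun j => Y (i, j)) + b * f i (fun j => Z (i, j)) := by
      intro i
      have := (hconv i).2 (Set.mem_univ (fun j => Y (i, j)))
        (Set.mem_univ (fun j => Z (i, j))) ha hb hab
      exact this
    calc F0 (a • Y + b • Z) ≤ ∑ i, (a * f i (fun j => Y (i, j)) + b * f i (fun j => Z (i, j))) :=
          Finset.sum_le_sum fun i _ => h i
      _ = a * F0 Y + b * F0 Z := by
          rw [Finset.sum_add_distrib, ← Finset.mul_sum, ← Finset.mul_sum]
  set s : Set (E × ℝ) := {p | F0 p.1 < p.2} with hs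
  have hsopen : IsOpen s := isOpen_lt (hF0cont.comp continuous_fst) continuous_snd
  have hsconv : Convex ℝ s := by
    intro p hp q hq a b ha hb hab
    simp only [hs, Set.mem_setOf_eq] at *
    calc F0 (a • p + b • q).1 = F0 (a • p.1 + b • q.1) := rfl
      _ ≤ a * F0 p.1 + b * F0 q.1 := hF0conv _ _ _ _ ha hb hab
      _ < a * p.2 + b * q.2 := by
          rcases eq_or_lt_of_le ha with h | h
          · simp only [← h, zero_mul, zero_add] at hab ⊢
            have : b = 1 := by linarith
            nlinarith [hq]
          rcases eq_or_lt_of_le hb with h' | h'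
          · simp only [← h', zero_mul, add_zero] at hab ⊢
            have : a = 1 := by linarith
            nlinarith [hp]
          · have := mul_lt_mul_of_pos_left hp h
            have := mul_lt_mul_of_pos_left hq h'
            nlinarith
      _ = (a • p + b • q).2 := rfl
  set c0 : ℝ := F0 (fun p => xs p.2) with hc0
  set T : Set (E × ℝ) := Set.range (fun v : Fin d → ℝ => ((fun p => v p.2, c0) : E × ℝ)) with hT
  have hTconv : Convex ℝ T := by
    rintro _ ⟨v, rfl⟩ _ ⟨w, rfl⟩ a b ha hb hab
    refine ⟨a • v + b • w, ?_⟩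
    simp only [Prod.smul_mk, Prod.mk_add_mk, Prod.mk.injEq, smul_eq_mul]
    constructor
    · funext p; rfl
    · rw [← add_mul, hab, one_mul]
  have hdisj : Disjoint s T := by
    rw [Set.disjoint_right]
    rintro _ ⟨v, rfl⟩ hmem
    simp only [hs, Set.mem_setOf_eq] at hmem
    have h1 : F0 (fun p : Fin n × Fin d => v p.2) = ∑ i, f i v := by
      simp [hF0]
    have h2 : c0 = ∑ i, f i xs := by simp [hc0, hF0]
    rw [h1, h2] at hmem
    exact absurd hmem (not_lt.2 (hmin v))
  obtain ⟨φ, u, hsep1, hsep2⟩ := geometric_hahn_banach_open hsconv hsopen hTconv hdisj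
  set c : ℝ := φ (0, 1) with hc
  set ψ : E →ₗ[ℝ] ℝ :=
    { toFun := fun y => φ (y, 0)
      map_add' := by
        intro y z
        show φ (y + z, 0) = φ (y, 0) + φ (z, 0)
        rw [show ((y + z, 0) : E × ℝ) = (y, 0) + (z, 0) by rw [Prod.mk_add_mk, add_zero],
          map_add]
      map_smul' := by
        intro a y
        show φ (a • y, 0) = a • φ (y, 0)
        rw [show ((a • y, 0) : E × ℝ) = a • (y, 0) by rw [Prod.smul_mk, smul_zero],
          _root_.map_smul] } with hψdef
  have hψ : ∀ y : E, ψ y = φ (y, 0) := fun _ => rfl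
  have hφsplit : ∀ (y : E) (t : ℝ), φ (y, t) = ψ y + t * c := by
    intro y t
    rw [show ((y, t) : E × ℝ) = (y, 0) + t • ((0 : E), (1:ℝ)) by
      rw [Prod.smul_mk, Prod.mk_add_mk, smul_zero, add_zero, smul_eq_mul, mul_one, zero_add],
      map_add, _root_.map_smul, hψ, smul_eq_mul, hc]
  have h1 : ∀ (y : E) (t : ℝ), F0 y < t → ψ y + t * c < u := by
    intro y t ht
    have := hsep1 (y, t) ht
    rwa [hφsplit] at this
  have h2 : ∀ v : Fin d → ℝ, u ≤ ψ (fun p => v p.2) + c0 * c := by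
    intro v
    have := hsep2 _ ⟨v, rfl⟩
    rwa [hφsplit] at this
  have hcle : c ≤ 0 := by
    by_contra hpos
    push_neg at hpos
    have h := h1 0 (max (F0 0 + 1) ((u - ψ 0) / c + 1))
      (lt_of_lt_of_le (by linarith) (le_max_left _ _))
    have hle : (u - ψ 0) / c + 1 ≤ max (F0 0 + 1) ((u - ψ 0) / c + 1) := le_max_right _ _
    have hgt : u - ψ 0 < max (F0 0 + 1) ((u - ψ 0) / c + 1) * c := by
      rw [← div_lt_iff₀ hpos]
      linarith
    linarith
  have hcne : c ≠ 0 := by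
    intro h0
    have hlt : ψ (fun p => xs p.2) < u := by
      have := h1 (fun p => xs p.2) (F0 (fun p => xs p.2) + 1) (by linarith)
      rw [h0] at this; linarith
    have := h2 xs
    rw [h0] at this; linarith
  have hcneg : c < 0 := lt_of_le_of_ne hcle hcne
  have h3 : ∀ y : E, ψ y + F0 y * c ≤ u := by
    intro y
    by_contra hgt
    push_neg at hgt
    have htc : (u - ψ y) / c * c = u - ψ y := div_mul_cancel₀ _ hcne
    have hFt : F0 y < (u - ψ y) / c := by
      rw [lt_div_iff_of_neg hcneg]
      linarith
    have := h1 y _ hFt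
    rw [htc] at this
    linarith
  have h4 : ∀ v : Fin d → ℝ, ψ (fun p => v p.2) = 0 := by
    intro v
    by_contra hne
    set a := ψ (fun p => v p.2) with ha
    have key : ∀ lam : ℝ, u ≤ lam * a + c0 * c := by
      intro lam
      have h := h2 (lam • v)
      have heq : (fun p : Fin n × Fin d => (lam • v) p.2)
          = lam • (fun p : Fin n × Fin d => v p.2) := by
        funext p; simp [smul_eq_mul]
      rw [heq, _root_.map_smul, smul_eq_mul, ← ha] at h
      exact h
    have hkey := key ((u - c0 * c - 1) / a)
    rw [div_mul_cancel₀ _ hne] at hkey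
    linarith
  have h5 : u ≤ c0 * c := by
    have h := h2 0
    have h0 : ψ (fun p : Fin n × Fin d => (0 : Fin d → ℝ) p.2) = 0 := h4 0
    rw [h0] at h
    linarith
  set G : Fin n × Fin d → ℝ :=
    fun q => ψ (fun p => if q = p then 1 else 0) / (-c) with hG
  have hGdot : ∀ y : E, G ⬝ᵥ y = ψ y / (-c) := by
    intro y
    rw [LinearMap.pi_apply_eq_sum_univ ψ y, Finset.sum_div, dotProduct]
    congr 1
    funext q
    rw [hG, smul_eq_mul]
    ring
  refine ⟨G, ?_, ?_⟩
  · intro Y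
    have hXsψ : ψ (fun p : Fin n × Fin d => xs p.2) = 0 := h4 xs
    have hGY : G ⬝ᵥ (Y - fun p => xs p.2) = ψ (Y - fun p => xs p.2) / (-c) := hGdot _
    have hψsub : ψ (Y - fun p => xs p.2) = ψ Y := by
      rw [map_sub, hXsψ, sub_zero]
    have hbound : ψ Y ≤ c * (c0 - F0 Y) := by
      nlinarith [h3 Y, h5]
    have hfin : ψ Y / (-c) ≤ F0 Y - c0 := by
      rw [div_le_iff₀ (by linarith : (0:ℝ) < -c)]
      nlinarith
    rw [hGY, hψsub]
    have hc0eq : c0 = ∑ i, f i (fun j => xs j) := by simp [hc0, hF0]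
    have hF0Y : F0 Y = ∑ i, f i (fun j => Y (i,j)) := rfl
    linarith
  · intro v
    rw [hGdot, h4]
    simp

lemma lap_entry_sum {n : ℕ} (A : Matrix (Fin n) (Fin n) ℝ)
    (L : Matrix (Fin n) (Fin n) ℝ)
    (hL : L = Matrix.diagonal (fun i => ∑ j, A i j) - A)
    (v : Fin n → ℝ) (i : Fin n) :
    (L *ᵥ v) i = ∑ j, A i j * (v i - v j) := by
  classical
  simp only [hL, Matrix.mulVec, dotProduct, Matrix.sub_apply, Matrix.diagonal_apply, sub_mul,
    Finset.sum_sub_distrib, ite_mul, zero_mul, Finset.sum_ite_eq, Finset.mem_univ, if_true,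
    mul_sub, Finset.sum_mul]

lemma lap_surj {n : ℕ} (A : Matrix (Fin n) (Fin n) ℝ)
    (hA : ∀ i j, 0 ≤ A i j)
    (hconn : ∀ i j : Fin n, i ≠ j → Relation.TransGen (fun a b => 0 < A a b) i j)
    (hbal : ∀ i, ∑ j, A i j = ∑ j, A j i)
    (L : Matrix (Fin n) (Fin n) ℝ)
    (hL : L = Matrix.diagonal (fun i => ∑ j, A i j) - A)
    (w : Fin n → ℝ) (hw : ∑ i, w i = 0) :
    ∃ z : Fin n → ℝ, L *ᵥ z = w := by
  classical
  rcases Nat.eq_zero_or_pos n with hn | hn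
  · subst hn
    exact ⟨0, funext fun i => Fin.elim0 i⟩
  have hne : Nonempty (Fin n) := ⟨⟨0, hn⟩⟩
  -- kernel is the constants
  have hker : ∀ v : Fin n → ℝ, L *ᵥ v = 0 → ∃ t, v = fun _ => t := by
    intro v hv
    obtain ⟨i0, -, hi0⟩ := Finset.exists_max_image Finset.univ v ⟨⟨0, hn⟩, Finset.mem_univ _⟩
    have key : ∀ i, v i = v i0 → ∀ j, 0 < A i j → v j = v i0 := by
      intro i hi j hj
      have h0 : ∑ k, A i k * (v i - v k) = 0 := by
        rw [← lap_entry_sum A L hL v i, hv]; rfl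
      have hnonneg : ∀ k ∈ Finset.univ, 0 ≤ A i k * (v i - v k) := fun k _ =>
        mul_nonneg (hA i k) (by rw [hi]; linarith [hi0 k (Finset.mem_univ k)])
      have hz := (Finset.sum_eq_zero_iff_of_nonneg hnonneg).1 h0 j (Finset.mem_univ j)
      have : v i - v j = 0 := by
        by_contra hne'
        exact hne' (by
          have := mul_eq_zero.1 hz
          rcases this with h | h
          · exact absurd h (ne_of_gt hj)
          · exact h)
      linarith [hi]
    have hall0 : ∀ i, Relation.TransGen (fun a b => 0 < A a b) i0 i → v i = v i0 := by
      intro i htg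
      induction htg with
      | single hr => exact key i0 rfl _ hr
      | tail hab hbc ih => exact key _ ih _ hbc
    have hall : ∀ i, v i = v i0 := by
      intro i
      by_cases h : i = i0
      · rw [h]
      · exact hall0 i (hconn i0 i (Ne.symm h))
    exact ⟨v i0, funext hall⟩
  -- linear algebra
  set T : (Fin n → ℝ) →ₗ[ℝ] (Fin n → ℝ) := Matrix.mulVecLin L with hT
  set one : Fin n → ℝ := fun _ => 1 with hone
  have honenz : one ≠ 0 := by
    intro h
    have := congrFun h ⟨0, hn⟩
    simp [hone] at this
  have hkerT : LinearMap.ker T = Submodule.span ℝ {one} := by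
    apply le_antisymm
    · intro v hv
      obtain ⟨t, rfl⟩ := hker v (by simpa [hT, Matrix.mulVecLin_apply] using hv)
      exact Submodule.mem_span_singleton.2 ⟨t, by funext i; simp [hone, smul_eq_mul]⟩
    · rw [Submodule.span_le, Set.singleton_subset_iff]
      have : L *ᵥ one = 0 := by
        funext i
        rw [lap_entry_sum A L hL one i]
        simp [hone]
      simpa [hT, LinearMap.mem_ker, Matrix.mulVecLin_apply] using this
  have hfinker : Module.finrank ℝ (LinearMap.ker T) = 1 := by
    rw [hkerT]
    exact finrank_span_singleton honenz
  have hfindom : Module.finrank ℝ (Fin n → ℝ) = n := by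
    simp [Module.finrank_fin_fun]
  have hrange : Module.finrank ℝ (LinearMap.range T) = n - 1 := by
    have := LinearMap.finrank_range_add_finrank_ker T
    rw [hfinker, hfindom] at this
    omega
  -- the sum functional
  set σ : (Fin n → ℝ) →ₗ[ℝ] ℝ := ∑ i, LinearMap.proj i with hσ
  have hσapp : ∀ v : Fin n → ℝ, σ v = ∑ i, v i := by
    intro v
    simp [hσ, LinearMap.sum_apply, LinearMap.proj_apply]
  have hσsurj : Function.Surjective σ := by
    intro r
    refine ⟨fun _ => r / n, ?_⟩
    rw [hσapp]
    rw [Finset.sum_const, Finset.card_univ, Fintype.card_fin, nsmul_eq_mul]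
    field_simp
  have hfinkerσ : Module.finrank ℝ (LinearMap.ker σ) = n - 1 := by
    have h1 := LinearMap.finrank_range_add_finrank_ker σ
    rw [hfindom, LinearMap.range_eq_top.2 hσsurj, finrank_top] at h1
    simp [Module.finrank_self] at h1
    omega
  have hle : LinearMap.range T ≤ LinearMap.ker σ := by
    rintro - ⟨z, rfl⟩
    rw [LinearMap.mem_ker, hσapp]
    have : ∀ i, T z i = ∑ j, A i j * (z i - z j) := fun i => lap_entry_sum A L hL z i
    calc ∑ i, T z i = ∑ i, ∑ j, A i j * (z i - z j) := Finset.sum_congr rfl fun i _ => this i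
      _ = ∑ i, ∑ j, A i j * z i - ∑ i, ∑ j, A i j * z j := by
          simp [mul_sub, Finset.sum_sub_distrib]
      _ = ∑ i, (∑ j, A i j) * z i - ∑ j, (∑ i, A i j) * z j := by
          rw [Finset.sum_comm (f := fun i j => A i j * z j)]
          simp [Finset.sum_mul]
      _ = 0 := by
          have : ∀ j, (∑ i, A i j) * z j = (∑ i, A j i) * z j := fun j => by rw [← hbal j]
          rw [Finset.sum_congr rfl fun j _ => this j]
          ring_nf
  have heq : LinearMap.range T = LinearMap.ker σ :=
    Submodule.eq_of_le_of_finrank_le hle (by rw [hrange, hfinkerσ])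
  have hwmem : w ∈ LinearMap.ker σ := by rw [LinearMap.mem_ker, hσapp]; exact hw
  rw [← heq] at hwmem
  obtain ⟨z, hz⟩ := hwmem
  exact ⟨z, by simpa [hT, Matrix.mulVecLin_apply] using hz⟩

lemma BL_mulVec {n d : ℕ} (L : Matrix (Fin n) (Fin n) ℝ)
    (BL : Matrix (Fin n × Fin d) (Fin n × Fin d) ℝ)
    (hBL : BL = Matrix.kroneckerMap (· * ·) L (1 : Matrix (Fin d) (Fin d) ℝ))
    (Z : Fin n × Fin d → ℝ) (i : Fin n) (j : Fin d) :
    (BL *ᵥ Z) (i, j) = ∑ k, L i k * Z (k, j) := by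
  classical
  simp [hBL, Matrix.mulVec, dotProduct, Fintype.sum_prod_type, Matrix.kroneckerMap_apply,
    Matrix.one_apply, mul_ite, ite_mul, mul_zero, zero_mul, mul_one, Finset.sum_ite_eq,
    Finset.mem_univ]


lemma quad_nonneg {n : ℕ} (A : Matrix (Fin n) (Fin n) ℝ)
    (hA : ∀ i j, 0 ≤ A i j)
    (hbal : ∀ i, ∑ j, A i j = ∑ j, A j i)
    (L : Matrix (Fin n) (Fin n) ℝ)
    (hL : L = Matrix.diagonal (fun i => ∑ j, A i j) - A)
    (u : Fin n → ℝ) : 0 ≤ u ⬝ᵥ (L *ᵥ u) := by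
  classical
  have h1 : u ⬝ᵥ (L *ᵥ u) = ∑ i, ∑ k, A i k * (u i * u i) - ∑ i, ∑ k, A i k * (u i * u k) := by
    rw [dotProduct]
    rw [Finset.sum_congr rfl fun i _ => by
      rw [lap_entry_sum A L hL u i, Finset.mul_sum]]
    rw [← Finset.sum_sub_distrib]
    congr 1; funext i
    rw [← Finset.sum_sub_distrib]
    congr 1; funext k
    ring
  have h2 : ∑ i, ∑ k, A i k * (u k * u k) = ∑ i, ∑ k, A i k * (u i * u i) := by
    rw [Finset.sum_comm]
    apply Finset.sum_congr rfl
    intro k _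
    rw [← Finset.sum_mul, ← Finset.sum_mul, ← hbal k]
  have key : u ⬝ᵥ (L *ᵥ u) = (1/2) * ∑ i, ∑ k, A i k * (u i - u k)^2 := by
    rw [h1]
    rw [show ∑ i, ∑ k, A i k * (u i - u k)^2
        = ∑ i, ∑ k, (A i k * (u i * u i) + A i k * (u k * u k) - 2 * (A i k * (u i * u k))) from
      Finset.sum_congr rfl fun i _ => Finset.sum_congr rfl fun k _ => by ring]
    simp only [Finset.sum_add_distrib, Finset.sum_sub_distrib, ← Finset.mul_sum]
    rw [h2]
    ring
  rw [key]
  have : 0 ≤ ∑ i, ∑ k, A i k * (u i - u k)^2 :=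
    Finset.sum_nonneg fun i _ => Finset.sum_nonneg fun k _ =>
      mul_nonneg (hA i k) (sq_nonneg _)
  linarith


open Matrix in
/-- If `𝐱* = 1_n ⊗ x*` where `x*` minimizes `f = ∑ i, f^i`, then there exists
`𝐳*` with `𝐋𝐳* ∈ −∂f̃(𝐱*)` such that `(𝐱*, 𝐳*)` is a saddle point of
`F(𝐱,𝐳) = f̃(𝐱) + 𝐱ᵀ𝐋𝐳 + ½𝐱ᵀ𝐋𝐱`. -/
theorem minimizer_gives_saddle_point
    {n d : ℕ} (A : Matrix (Fin n) (Fin n) ℝ)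
    (hA : ∀ i j, 0 ≤ A i j)
    (hconn : ∀ i j : Fin n, i ≠ j → Relation.TransGen (fun a b => 0 < A a b) i j)
    (hbal : ∀ i, ∑ j, A i j = ∑ j, A j i)
    (L : Matrix (Fin n) (Fin n) ℝ)
    (hL : L = Matrix.diagonal (fun i => ∑ j, A i j) - A)
    (BL : Matrix (Fin n × Fin d) (Fin n × Fin d) ℝ)
    (hBL : BL = Matrix.kroneckerMap (· * ·) L (1 : Matrix (Fin d) (Fin d) ℝ))
    (f : Fin n → (Fin d → ℝ) → ℝ)
    (hconv : ∀ i, ConvexOn ℝ Set.univ (f i))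
    (hlip : ∀ i, LocallyLipschitz (f i))
    (ftil : (Fin n × Fin d → ℝ) → ℝ)
    (hftil : ftil = fun X => ∑ i, f i (fun j => X (i, j)))
    (F : (Fin n × Fin d → ℝ) → (Fin n × Fin d → ℝ) → ℝ)
    (hF : F = fun X Z => ftil X + X ⬝ᵥ (BL *ᵥ Z) + (1 / 2) * (X ⬝ᵥ (BL *ᵥ X)))
    (xs : Fin d → ℝ) (hmin : ∀ y : Fin d → ℝ, ∑ i, f i xs ≤ ∑ i, f i y)
    (Xs : Fin n × Fin d → ℝ) (hXs : Xs = fun p => xs p.2) :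
    ∃ Zs : Fin n × Fin d → ℝ,
      (-(BL *ᵥ Zs)) ∈ subdiff ftil Xs ∧
      ∀ X Z, F Xs Z ≤ F Xs Zs ∧ F Xs Zs ≤ F X Zs := by
  classical
  obtain ⟨G, hG1, hG2⟩ := subgrad_exists f hconv hlip xs hmin
  -- column sums of G vanish
  have hcol : ∀ j, ∑ i, G (i, j) = 0 := by
    intro j
    have h := hG2 (Pi.single j 1)
    simpa [dotProduct, Fintype.sum_prod_type, Pi.single_apply, mul_ite, mul_one, mul_zero,
      Finset.sum_ite_eq, Finset.mem_univ] using h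
  have hZ : ∀ j : Fin d, ∃ z : Fin n → ℝ, L *ᵥ z = fun i => -G (i, j) := by
    intro j
    apply lap_surj A hA hconn hbal L hL
    rw [Finset.sum_neg_distrib]
    rw [hcol j]
    ring
  choose zc hzc using hZ
  set Zs : Fin n × Fin d → ℝ := fun p => zc p.2 p.1 with hZsdef
  have hBLZ : BL *ᵥ Zs = -G := by
    funext p
    obtain ⟨i, j⟩ := p
    rw [BL_mulVec L BL hBL _ i j]
    have h := congrFun (hzc j) i
    simp only [Matrix.mulVec, dotProduct] at h
    simpa [hZsdef] using h
  have hGXs : G ⬝ᵥ Xs = 0 := by rw [hXs]; exact hG2 xs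
  have hftilXs : ftil Xs = ∑ i, f i (fun j => xs j) := by
    rw [hftil, hXs]
  have hsub' : ∀ X : Fin n × Fin d → ℝ, ftil Xs + G ⬝ᵥ X ≤ ftil X := by
    intro X
    have h := hG1 X
    have hd : G ⬝ᵥ (X - fun p => xs p.2) = G ⬝ᵥ X := by
      rw [dotProduct_sub, show (fun p : Fin n × Fin d => xs p.2) = Xs from hXs.symm,
        hGXs, sub_zero]
    rw [hd] at h
    rw [hftilXs, hftil]
    exact h
  refine ⟨Zs, ?_, ?_⟩
  · -- subdifferential membership
    rw [hBLZ, neg_neg]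
    intro Y
    have h := hG1 Y
    have hd : G ⬝ᵥ (Y - Xs) = G ⬝ᵥ (Y - fun p => xs p.2) := by rw [hXs]
    rw [hftilXs, hftil, hd]
    exact h
  · -- saddle point
    have hcolL : ∀ k, ∑ i, L i k = 0 := by
      intro k
      have h : ∑ i, L i k = ∑ i, A k i - ∑ i, A i k := by
        simp only [hL, Matrix.sub_apply, Matrix.diagonal_apply, Finset.sum_sub_distrib]
        congr 1
        simp [Finset.sum_ite_eq', Finset.mem_univ]
      rw [h, hbal k]
      ring
    have hXsvec : Xs ᵥ* BL = 0 := by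
      funext q
      obtain ⟨k, l⟩ := q
      have h : (Xs ᵥ* BL) (k, l) = ∑ i, xs l * L i k := by
        simp [Matrix.vecMul, dotProduct, hBL, hXs, Fintype.sum_prod_type,
          Matrix.kroneckerMap_apply, Matrix.one_apply, mul_ite, ite_mul, mul_zero, zero_mul,
          mul_one, Finset.sum_ite_eq', Finset.mem_univ, mul_comm]
      rw [h, ← Finset.mul_sum, hcolL k, mul_zero]
      rfl
    have hXsdotZ : ∀ Z : Fin n × Fin d → ℝ, Xs ⬝ᵥ (BL *ᵥ Z) = 0 := by
      intro Z
      rw [Matrix.dotProduct_mulVec, hXsvec, zero_dotProduct]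
    have hquad : ∀ X : Fin n × Fin d → ℝ, 0 ≤ X ⬝ᵥ (BL *ᵥ X) := by
      intro X
      have hsplit : X ⬝ᵥ (BL *ᵥ X) = ∑ j, (fun i => X (i, j)) ⬝ᵥ (L *ᵥ (fun i => X (i, j))) := by
        rw [dotProduct, Fintype.sum_prod_type, Finset.sum_comm]
        apply Finset.sum_congr rfl
        intro j _
        rw [dotProduct]
        apply Finset.sum_congr rfl
        intro i _
        rw [BL_mulVec L BL hBL X i j]
        rfl
      rw [hsplit]
      exact Finset.sum_nonneg fun j _ => quad_nonneg A hA hbal L hL _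
    intro X Z
    simp only [hF]
    constructor
    · rw [hXsdotZ Z, hXsdotZ Zs]
    · rw [hXsdotZ Zs, hXsdotZ Xs, hBLZ, dotProduct_neg]
      have h1 := hsub' X
      have h2 := hquad X
      have h3 : G ⬝ᵥ X = X ⬝ᵥ G := dotProduct_comm _ _
      linarith
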